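/- Let A be a bounded linear operator on H. Then η(A)² ≥ (1/2)·max{ ber(A + |A|²)² + c(A − |A|²)², ber(A − |A|²)² + c(A + |A|²)² }. -/

import Mathlib

set_option linter.unusedSectionVars false
set_option linter.unreachableTactic false
set_option linter.unusedTactic false
set_option linter.deprecated false


open scoped InnerProductSpace
open ContinuousLinearMap

variable {H : Type*} [NormedAddCommGroup H] [InnerProductSpace ℂ H] [CompleteSpace H]
variable {Ω : Type*} [Nonempty Ω]

/-- Berezin number: `ber(T) = sup_{λ∈Ω} |⟨T k̂_λ, k̂_λ⟩|`. -/
noncomputable def ber (k : Ω → H) (T : H →L[ℂ] H) : ℝ :=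
  ⨆ lam : Ω, ‖⟪T (k lam), k lam⟫_ℂ‖

/-- Berezin norm: `‖T‖_ber = sup_{λ,μ∈Ω} |⟨T k̂_λ, k̂_μ⟩|`. -/
noncomputable def bernorm (k : Ω → H) (T : H →L[ℂ] H) : ℝ :=
  ⨆ p : Ω × Ω, ‖⟪T (k p.1), k p.2⟫_ℂ‖

/-- Least Berezin number: `c(T) = inf_{λ∈Ω} |⟨T k̂_λ, k̂_λ⟩|`. -/
noncomputable def lber (k : Ω → H) (T : H →L[ℂ] H) : ℝ :=
  ⨅ lam : Ω, ‖⟪T (k lam), k lam⟫_ℂ‖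

/-- Davis-Wielandt-Berezin radius: `η(T) = sup_{λ∈Ω} √(|⟨T k̂_λ, k̂_λ⟩|² + ‖T k̂_λ‖⁴)`. -/
noncomputable def eta (k : Ω → H) (T : H →L[ℂ] H) : ℝ :=
  ⨆ lam : Ω, Real.sqrt (‖⟪T (k lam), k lam⟫_ℂ‖ ^ 2 + ‖T (k lam)‖ ^ 4)

/-- The modulus `|A| = (A*A)^{1/2}`. -/
noncomputable def absop (A : H →L[ℂ] H) : H →L[ℂ] H := CFC.sqrt (adjoint A * A)

private lemma absop_sq_inner (A : H →L[ℂ] H) (x : H) :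
    ⟪((absop A) ^ 2) x, x⟫_ℂ = (‖A x‖ ^ 2 : ℂ) := by
  rw [absop, CFC.sq_sqrt (adjoint A * A) (by simpa [star_eq_adjoint] using star_mul_self_nonneg A)]
  simp [ContinuousLinearMap.mul_apply, adjoint_inner_left, inner_self_eq_norm_sq_to_K]

private lemma bdd_ber (k : Ω → H) (hk : ∀ lam, ‖k lam‖ = 1) (T : H →L[ℂ] H) :
    BddAbove (Set.range fun lam : Ω => ‖⟪T (k lam), k lam⟫_ℂ‖) := by
  refine ⟨‖T‖, ?_⟩
  rintro _ ⟨lam, rfl⟩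
  calc ‖⟪T (k lam), k lam⟫_ℂ‖ ≤ ‖T (k lam)‖ * ‖k lam‖ := norm_inner_le_norm _ _
    _ ≤ ‖T‖ * ‖k lam‖ * ‖k lam‖ := by
        gcongr; exact T.le_opNorm _
    _ = ‖T‖ := by rw [hk]; ring

private lemma bdd_eta (k : Ω → H) (hk : ∀ lam, ‖k lam‖ = 1) (T : H →L[ℂ] H) :
    BddAbove (Set.range fun lam : Ω =>
      Real.sqrt (‖⟪T (k lam), k lam⟫_ℂ‖ ^ 2 + ‖T (k lam)‖ ^ 4)) := by
  refine ⟨Real.sqrt (‖T‖ ^ 2 + ‖T‖ ^ 4), ?_⟩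
  rintro _ ⟨lam, rfl⟩
  have h1 : ‖⟪T (k lam), k lam⟫_ℂ‖ ≤ ‖T‖ := by
    calc ‖⟪T (k lam), k lam⟫_ℂ‖ ≤ ‖T (k lam)‖ * ‖k lam‖ := norm_inner_le_norm _ _
      _ ≤ ‖T‖ * ‖k lam‖ * ‖k lam‖ := by gcongr; exact T.le_opNorm _
      _ = ‖T‖ := by rw [hk]; ring
  have h2 : ‖T (k lam)‖ ≤ ‖T‖ := by
    calc ‖T (k lam)‖ ≤ ‖T‖ * ‖k lam‖ := T.le_opNorm _
      _ = ‖T‖ := by rw [hk]; ring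
  apply Real.sqrt_le_sqrt
  gcongr <;> positivity

private lemma norm_add_sub_sq (z : ℂ) (r : ℝ) :
    ‖z + (r : ℂ)‖ ^ 2 + ‖z - (r : ℂ)‖ ^ 2 = 2 * (‖z‖ ^ 2 + r ^ 2) := by
  simp only [Complex.sq_norm, Complex.normSq_apply, Complex.add_re,
    Complex.add_im, Complex.sub_re, Complex.sub_im, Complex.ofReal_re, Complex.ofReal_im]
  ring

private lemma aux_bound (k : Ω → H) (hk : ∀ lam, ‖k lam‖ = 1) (A B C : H →L[ℂ] H)
    (h : ∀ lam : Ω, ‖⟪B (k lam), k lam⟫_ℂ‖ ^ 2 + ‖⟪C (k lam), k lam⟫_ℂ‖ ^ 2 ≤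
      2 * (‖⟪A (k lam), k lam⟫_ℂ‖ ^ 2 + ‖A (k lam)‖ ^ 4)) :
    (ber k B) ^ 2 + (lber k C) ^ 2 ≤ 2 * (eta k A) ^ 2 := by
  obtain ⟨lam0⟩ := ‹Nonempty Ω›
  -- pointwise: f λ ^ 2 + g λ ^ 2 ≤ 2 * eta ^ 2
  have key : ∀ lam : Ω, ‖⟪B (k lam), k lam⟫_ℂ‖ ^ 2 + ‖⟪C (k lam), k lam⟫_ℂ‖ ^ 2 ≤
      2 * (eta k A) ^ 2 := by
    intro lam
    refine (h lam).trans ?_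
    have hsq : Real.sqrt (‖⟪A (k lam), k lam⟫_ℂ‖ ^ 2 + ‖A (k lam)‖ ^ 4) ≤ eta k A :=
      le_ciSup (bdd_eta k hk A) lam
    have hnn : (0:ℝ) ≤ Real.sqrt (‖⟪A (k lam), k lam⟫_ℂ‖ ^ 2 + ‖A (k lam)‖ ^ 4) :=
      Real.sqrt_nonneg _
    have : ‖⟪A (k lam), k lam⟫_ℂ‖ ^ 2 + ‖A (k lam)‖ ^ 4 ≤ (eta k A) ^ 2 := by
      have := Real.sq_sqrt (by positivity : (0:ℝ) ≤ ‖⟪A (k lam), k lam⟫_ℂ‖ ^ 2 + ‖A (k lam)‖ ^ 4)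
      nlinarith [hsq, hnn]
    linarith
  have hlber_le : ∀ lam : Ω, lber k C ≤ ‖⟪C (k lam), k lam⟫_ℂ‖ := fun lam =>
    ciInf_le ⟨0, by rintro _ ⟨m, rfl⟩; positivity⟩ lam
  have hlber_nn : 0 ≤ lber k C := le_ciInf fun lam => norm_nonneg _
  have hD : (0:ℝ) ≤ 2 * (eta k A) ^ 2 - (lber k C) ^ 2 := by
    have := key lam0
    have := hlber_le lam0
    nlinarith [norm_nonneg (⟪B (k lam0), k lam0⟫_ℂ), norm_nonneg (⟪C (k lam0), k lam0⟫_ℂ),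
      hlber_nn]
  have hber : ber k B ≤ Real.sqrt (2 * (eta k A) ^ 2 - (lber k C) ^ 2) := by
    refine ciSup_le fun lam => ?_
    have hs := Real.sq_sqrt hD
    have hsn := Real.sqrt_nonneg (2 * (eta k A) ^ 2 - (lber k C) ^ 2)
    have := key lam
    have h2 := hlber_le lam
    nlinarith [norm_nonneg (⟪B (k lam), k lam⟫_ℂ), norm_nonneg (⟪C (k lam), k lam⟫_ℂ), hlber_nn]
  have hber_nn : 0 ≤ ber k B := le_trans (norm_nonneg _) (le_ciSup (bdd_ber k hk B) lam0)
  have := Real.sq_sqrt hD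
  nlinarith [hber, Real.sqrt_nonneg (2 * (eta k A) ^ 2 - (lber k C) ^ 2)]

theorem stmt5 (k : Ω → H) (hk : ∀ lam, ‖k lam‖ = 1) (A : H →L[ℂ] H) :
    (eta k A) ^ 2 ≥
      (1 / 2) * max ((ber k (A + (absop A) ^ 2)) ^ 2 + (lber k (A - (absop A) ^ 2)) ^ 2)
        ((ber k (A - (absop A) ^ 2)) ^ 2 + (lber k (A + (absop A) ^ 2)) ^ 2) := by
  have hid : ∀ lam : Ω,
      ‖⟪(A + (absop A) ^ 2) (k lam), k lam⟫_ℂ‖ ^ 2 +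
        ‖⟪(A - (absop A) ^ 2) (k lam), k lam⟫_ℂ‖ ^ 2 =
      2 * (‖⟪A (k lam), k lam⟫_ℂ‖ ^ 2 + ‖A (k lam)‖ ^ 4) := by
    intro lam
    have hp : ⟪(A + (absop A) ^ 2) (k lam), k lam⟫_ℂ =
        ⟪A (k lam), k lam⟫_ℂ + (‖A (k lam)‖ ^ 2 : ℂ) := by
      rw [ContinuousLinearMap.add_apply, inner_add_left, absop_sq_inner]
    have hm : ⟪(A - (absop A) ^ 2) (k lam), k lam⟫_ℂ =
        ⟪A (k lam), k lam⟫_ℂ - (‖A (k lam)‖ ^ 2 : ℂ) := by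
      rw [ContinuousLinearMap.sub_apply, inner_sub_left, absop_sq_inner]
    rw [hp, hm, ← Complex.ofReal_pow, norm_add_sub_sq]
    ring
  have h1 := aux_bound k hk A (A + (absop A) ^ 2) (A - (absop A) ^ 2)
    (fun lam => le_of_eq (hid lam))
  have h2 := aux_bound k hk A (A - (absop A) ^ 2) (A + (absop A) ^ 2)
    (fun lam => le_of_eq (by rw [← hid lam]; ring))
  rw [ge_iff_le, div_mul_eq_mul_div, one_mul, div_le_iff₀ (by norm_num : (0:ℝ) < 2)]
  rw [max_le_iff]
  constructor <;> linarith
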